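/- arXiv:2106.12660 — 2 statements merged into one kernel-verified Lean document; each statement's English description precedes it below -/
import Mathlib

section
/- If A and B are measurable subsets of ℝ with λ(A) > 0 and λ(B) > 0, then there exists a rational number r such that λ((A + r) ∩ B) > 0. -/
open MeasureTheory Metric Filter
open scoped ENNReal

private lemma preimage_closedBall_add (a r δ : ℝ) :
    (fun x : ℝ => x + r) ⁻¹' closedBall a δ = closedBall (a - r) δ := by
  ext x; simp [Real.dist_eq, abs_sub_le_iff]

private lemma exists_density_radius {S : Set ℝ} (hS : MeasurableSet S)
    (hpos : 0 < volume S) :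
    ∃ x ∈ S, ∀ᶠ δ in nhdsWithin (0:ℝ) (Set.Ioi 0),
      (3/4 : ℝ≥0∞) * volume (closedBall x δ) < volume (S ∩ closedBall x δ) := by
  have hae := Besicovitch.ae_tendsto_measure_inter_div_of_measurableSet (volume : Measure ℝ) hS
  obtain ⟨x, hxS, hx⟩ := Measure.exists_mem_of_measure_ne_zero_of_ae hpos.ne'
    (ae_restrict_of_ae hae)
  refine ⟨x, hxS, ?_⟩
  rw [Set.indicator_of_mem hxS] at hx
  simp only [Pi.one_apply] at hx
  have h34 : (3/4 : ℝ≥0∞) < 1 := by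
    rw [ENNReal.div_lt_iff (by norm_num) (by norm_num)]
    norm_num
  have hev := hx.eventually (eventually_gt_nhds h34)
  filter_upwards [hev, eventually_mem_nhdsWithin] with δ hδ (hδpos : δ ∈ Set.Ioi 0)
  have hball0 : volume (closedBall x δ) ≠ 0 := by
    rw [Real.volume_closedBall]
    simp only [ne_eq, ENNReal.ofReal_eq_zero, not_le]
    linarith [hδpos.out]
  have hballtop : volume (closedBall x δ) ≠ ⊤ := by
    rw [Real.volume_closedBall]; exact ENNReal.ofReal_ne_top
  exact (ENNReal.lt_div_iff_mul_lt (Or.inl hball0) (Or.inl hballtop)).mp hδ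

/-- If `A, B ⊆ ℝ` are measurable with positive measure, then some rational
translate of `A` meets `B` in a set of positive measure. -/
theorem exists_rat_translate_inter_pos (A B : Set ℝ)
    (hA : MeasurableSet A) (hB : MeasurableSet B)
    (hApos : 0 < volume A) (hBpos : 0 < volume B) :
    ∃ r : ℚ, 0 < volume (((fun a : ℝ => a + (r : ℝ)) '' A) ∩ B) := by
  obtain ⟨a, haA, ha⟩ := exists_density_radius hA hApos
  obtain ⟨b, hbB, hb⟩ := exists_density_radius hB hBpos
  obtain ⟨δ, ⟨h1, h2⟩, (hδpos : δ ∈ Set.Ioi 0)⟩ :=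
    ((ha.and hb).and eventually_mem_nhdsWithin).exists
  have hδ0 : (0:ℝ) < δ := hδpos.out
  -- pick a rational r close to b - a
  obtain ⟨r, hr1, hr2⟩ := exists_rat_btwn (show b - a - δ/4 < b - a + δ/4 by linarith)
  refine ⟨r, ?_⟩
  set η : ℝ := |a + (r:ℝ) - b| with hη
  have hηlt : η < δ/4 := by
    rw [hη, abs_lt]; constructor <;> linarith
  have hη0 : 0 ≤ η := abs_nonneg _
  set Z : Set ℝ := closedBall b (δ + η) with hZ
  -- translate of A written as a preimage
  have himg : (fun x : ℝ => x + (r:ℝ)) '' A = (fun x : ℝ => x + -(r:ℝ)) ⁻¹' A :=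
    Set.image_add_right
  set A' : Set ℝ := (fun x : ℝ => x + -(r:ℝ)) ⁻¹' A with hA'
  have hA'meas : MeasurableSet A' := hA.preimage (measurable_add_const _)
  -- lower bound for volume (A' ∩ Z)
  have hsub1 : (fun x : ℝ => x + -(r:ℝ)) ⁻¹' (A ∩ closedBall a δ) ⊆ A' ∩ Z := by
    rw [Set.preimage_inter, preimage_closedBall_add]
    refine Set.inter_subset_inter subset_rfl (closedBall_subset_closedBall' ?_)
    have : dist (a - -(r:ℝ)) b = η := by
      rw [hη, Real.dist_eq]; ring_nf
    rw [this]
  have hvol1 : (3/4 : ℝ≥0∞) * volume (closedBall a δ) < volume (A' ∩ Z) := by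
    calc (3/4 : ℝ≥0∞) * volume (closedBall a δ) < volume (A ∩ closedBall a δ) := h1
      _ = volume ((fun x : ℝ => x + -(r:ℝ)) ⁻¹' (A ∩ closedBall a δ)) :=
          (measure_preimage_add_right _ _ _).symm
      _ ≤ volume (A' ∩ Z) := measure_mono hsub1
  have hvol2 : (3/4 : ℝ≥0∞) * volume (closedBall b δ) < volume (B ∩ Z) := by
    calc (3/4 : ℝ≥0∞) * volume (closedBall b δ) < volume (B ∩ closedBall b δ) := h2
      _ ≤ volume (B ∩ Z) := measure_mono (Set.inter_subset_inter subset_rfl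
          (closedBall_subset_closedBall (by linarith)))
  -- inclusion-exclusion
  by_contra hcon
  push_neg at hcon
  have hzero : volume ((A' ∩ Z) ∩ (B ∩ Z)) = 0 := by
    rw [himg] at hcon
    refine le_antisymm (le_trans (measure_mono ?_) (le_of_eq (le_antisymm hcon zero_le))) zero_le
    intro x ⟨⟨hx1, _⟩, ⟨hx2, _⟩⟩; exact ⟨hx1, hx2⟩
  have hZmeas : MeasurableSet Z := by rw [hZ]; exact measurableSet_closedBall
  have hkey : volume ((A' ∩ Z) ∪ (B ∩ Z)) + volume ((A' ∩ Z) ∩ (B ∩ Z))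
      = volume (A' ∩ Z) + volume (B ∩ Z) :=
    measure_union_add_inter (A' ∩ Z) (hB.inter hZmeas)
  rw [hzero, add_zero] at hkey
  have hunion : volume ((A' ∩ Z) ∪ (B ∩ Z)) ≤ volume Z := by
    apply measure_mono
    rintro x (⟨_, hx⟩ | ⟨_, hx⟩) <;> exact hx
  have hbig : volume Z < volume (A' ∩ Z) + volume (B ∩ Z) := by
    have hq : volume Z ≤ (3/4 : ℝ≥0∞) * volume (closedBall a δ)
        + (3/4 : ℝ≥0∞) * volume (closedBall b δ) := by
      rw [hZ, Real.volume_closedBall, Real.volume_closedBall, Real.volume_closedBall,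
        show (3/4 : ℝ≥0∞) = ENNReal.ofReal (3/4) by
          rw [ENNReal.ofReal_div_of_pos (by norm_num)]; norm_num,
        ← ENNReal.ofReal_mul (by norm_num),
        ← ENNReal.ofReal_add (by positivity) (by positivity)]
      exact ENNReal.ofReal_le_ofReal (by linarith)
    exact lt_of_le_of_lt hq (ENNReal.add_lt_add hvol1 hvol2)
  rw [← hkey] at hbig
  exact absurd (lt_of_lt_of_le hbig hunion) (lt_irrefl _)
end

section
/- Define f on the set D of reals in (0,1) with a unique binary expansion by swapping adjacent binary digits: if x has binary digits (x₀, x₁, x₂, …) then f(x) has digits (y₀, y₁, …) with y_{2n} = x_{2n+1} and y_{2n+1} = x_{2n}. Then for every monotone function g (from a subset of ℝ to ℝ), if the domain of f ∩ g is Lebesgue measurable, it has Lebesgue density at most 1 − 2⁻⁶ at every point, hence is a null set. -/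
open MeasureTheory Filter

/-- The real number with binary digit sequence `a` (digit `i` in position `i+1`). -/
noncomputable def bval (a : ℕ → Bool) : ℝ :=
  ∑' i : ℕ, (if a i then ((2 : ℝ) ^ (i + 1))⁻¹ else 0)

/-- Swap adjacent binary digits: positions `2n` and `2n+1` are exchanged. -/
def bswap (a : ℕ → Bool) : ℕ → Bool :=
  fun n => if n % 2 = 0 then a (n + 1) else a (n - 1)

/-- The graph of the digit-swapping function `f`, defined on reals in `(0,1)`
with a unique binary expansion. -/
def swapGraph : Set (ℝ × ℝ) :=
  {p | ∃ a : ℕ → Bool, bval a = p.1 ∧ (∀ b : ℕ → Bool, bval b = p.1 → b = a) ∧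
    p.1 ∈ Set.Ioo (0 : ℝ) 1 ∧ p.2 = bval (bswap a)}

noncomputable def bvalP (a : ℕ → Bool) (n : ℕ) : ℝ :=
  ∑ i ∈ Finset.range n, (if a i then ((2 : ℝ) ^ (i + 1))⁻¹ else 0)

lemma bterm_nonneg (a : ℕ → Bool) (i : ℕ) : 0 ≤ (if a i then ((2 : ℝ) ^ (i + 1))⁻¹ else 0) := by
  split <;> positivity

lemma bterm_le (a : ℕ → Bool) (i : ℕ) :
    (if a i then ((2 : ℝ) ^ (i + 1))⁻¹ else 0) ≤ ((2 : ℝ) ^ (i + 1))⁻¹ := by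
  split
  · exact le_refl _
  all_goals positivity

lemma summable_pow2 : Summable (fun i : ℕ => ((2 : ℝ) ^ (i + 1))⁻¹) := by
  have : (fun i : ℕ => ((2 : ℝ) ^ (i + 1))⁻¹) = fun i : ℕ => (1/2 : ℝ) * (1/2) ^ i := by
    funext i; rw [pow_succ]; simp only [one_div, inv_pow, mul_inv]; ring
  rw [this]
  exact (summable_geometric_of_lt_one (by norm_num) (by norm_num)).mul_left _

lemma bsummable (a : ℕ → Bool) :
    Summable (fun i => if a i then ((2 : ℝ) ^ (i + 1))⁻¹ else 0) :=
  Summable.of_nonneg_of_le (bterm_nonneg a) (bterm_le a) summable_pow2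

lemma tsum_tail_pow2 (n : ℕ) : ∑' i : ℕ, ((2 : ℝ) ^ (i + n + 1))⁻¹ = ((2:ℝ)^n)⁻¹ := by
  have : (fun i : ℕ => ((2 : ℝ) ^ (i + n + 1))⁻¹) = fun i : ℕ => ((2:ℝ)^(n+1))⁻¹ * (1/2) ^ i := by
    funext i; rw [pow_add, pow_add, pow_one]; simp only [one_div, inv_pow, mul_inv, pow_succ]; ring
  rw [this, tsum_mul_left, tsum_geometric_of_lt_one (by norm_num) (by norm_num)]
  rw [pow_succ]
  field_simp; ring

noncomputable def btail (a : ℕ → Bool) (n : ℕ) : ℝ :=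
  ∑' i : ℕ, (if a (i + n) then ((2 : ℝ) ^ (i + n + 1))⁻¹ else 0)

lemma pow2_le (i n : ℕ) : ((2:ℝ) ^ (i + n + 1))⁻¹ ≤ ((2:ℝ) ^ (i + 1))⁻¹ := by
  apply inv_anti₀ (by positivity)
  exact pow_le_pow_right₀ one_le_two (by omega)

lemma summable_pow2' (n : ℕ) : Summable (fun i : ℕ => ((2 : ℝ) ^ (i + n + 1))⁻¹) :=
  Summable.of_nonneg_of_le (fun i => by positivity) (fun i => pow2_le i n) summable_pow2

lemma btail_summable' (a : ℕ → Bool) (n : ℕ) :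
    Summable (fun i => if a (i + n) then ((2 : ℝ) ^ (i + n + 1))⁻¹ else 0) :=
  Summable.of_nonneg_of_le (fun i => bterm_nonneg _ _) (fun i => bterm_le _ _) (summable_pow2' n)

lemma bval_split (a : ℕ → Bool) (n : ℕ) : bval a = bvalP a n + btail a n := by
  rw [bval, bvalP, btail,
    ← Summable.sum_add_tsum_nat_add' (f := fun i => if a i then ((2 : ℝ) ^ (i + 1))⁻¹ else 0) (k := n)
      (btail_summable' a n)]

lemma btail_nonneg (a : ℕ → Bool) (n : ℕ) : 0 ≤ btail a n :=
  tsum_nonneg (fun i => bterm_nonneg _ _)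

lemma btail_summable (a : ℕ → Bool) (n : ℕ) :
    Summable (fun i => if a (i + n) then ((2 : ℝ) ^ (i + n + 1))⁻¹ else 0) :=
  btail_summable' a n

lemma btail_le (a : ℕ → Bool) (n : ℕ) : btail a n ≤ ((2:ℝ)^n)⁻¹ := by
  rw [← tsum_tail_pow2 n]
  exact Summable.tsum_le_tsum (fun i => bterm_le _ _) (btail_summable a n) (summable_pow2' n)

lemma btail_lt (a : ℕ → Bool) (n : ℕ) (h : ∃ i, n ≤ i ∧ a i = false) :
    btail a n < ((2:ℝ)^n)⁻¹ := by
  obtain ⟨i, hni, hai⟩ := h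
  rw [← tsum_tail_pow2 n]
  refine Summable.tsum_lt_tsum (i := i - n) (fun j => bterm_le _ _) ?_ (btail_summable a n) (summable_pow2' n)
  have : i - n + n = i := by omega
  rw [this, hai]
  simp only [Bool.false_eq_true, if_false]
  positivity

lemma btail_pos (a : ℕ → Bool) (n : ℕ) (h : ∃ i, n ≤ i ∧ a i = true) :
    0 < btail a n := by
  obtain ⟨i, hni, hai⟩ := h
  refine Summable.tsum_pos (btail_summable a n) (fun j => bterm_nonneg _ _) (i - n) ?_
  have : i - n + n = i := by omega
  rw [this, hai]
  simp only [if_true]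
  positivity

lemma bval_mem_Icc (a : ℕ → Bool) (n : ℕ) :
    bval a ∈ Set.Icc (bvalP a n) (bvalP a n + ((2:ℝ)^n)⁻¹) := by
  constructor
  · rw [bval_split a n]; linarith [btail_nonneg a n]
  · rw [bval_split a n]; linarith [btail_le a n]

/-- digits of `a` below `j`, then `true` at `j`, then all `false`. -/
def useq (a : ℕ → Bool) (j : ℕ) : ℕ → Bool :=
  fun i => if i < j then a i else decide (i = j)

/-- digits of `a` below `j`, then `false` at `j`, then all `true`. -/
def vseq (a : ℕ → Bool) (j : ℕ) : ℕ → Bool :=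
  fun i => if i < j then a i else !(decide (i = j))

lemma bvalP_congr (a b : ℕ → Bool) (n : ℕ) (h : ∀ i < n, a i = b i) :
    bvalP a n = bvalP b n := by
  unfold bvalP
  apply Finset.sum_congr rfl
  intro i hi
  rw [h i (Finset.mem_range.1 hi)]

lemma bval_useq (a : ℕ → Bool) (j : ℕ) : bval (useq a j) = bvalP a j + ((2:ℝ)^(j+1))⁻¹ := by
  rw [bval_split (useq a j) (j+1)]
  have h1 : bvalP (useq a j) (j+1) = bvalP a j + ((2:ℝ)^(j+1))⁻¹ := by
    rw [bvalP, Finset.sum_range_succ]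
    have : useq a j j = true := by simp [useq]
    rw [this, if_pos rfl]
    congr 1
    apply bvalP_congr
    intro i hi
    simp [useq, hi]
  have h2 : btail (useq a j) (j+1) = 0 := by
    rw [btail]
    convert tsum_zero with i
    have : useq a j (i + (j+1)) = false := by
      simp only [useq]
      rw [if_neg (by omega), decide_eq_false (by omega)]
    rw [this]
    simp
  rw [h1, h2]; ring

lemma bval_vseq (a : ℕ → Bool) (j : ℕ) : bval (vseq a j) = bvalP a j + ((2:ℝ)^(j+1))⁻¹ := by
  rw [bval_split (vseq a j) (j+1)]
  have h1 : bvalP (vseq a j) (j+1) = bvalP a j := by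
    rw [bvalP, Finset.sum_range_succ]
    have : vseq a j j = false := by simp [vseq]
    rw [this]
    simp only [Bool.false_eq_true, if_false, add_zero]
    apply bvalP_congr
    intro i hi
    simp [vseq, hi]
  have h2 : btail (vseq a j) (j+1) = ((2:ℝ)^(j+1))⁻¹ := by
    rw [btail, ← tsum_tail_pow2 (j+1)]
    apply tsum_congr
    intro i
    have : vseq a j (i + (j+1)) = true := by
      simp only [vseq]
      rw [if_neg (by omega), decide_eq_false (by omega)]
      rfl
    rw [this, if_pos rfl]
  rw [h1, h2]

lemma useq_ne_vseq (a : ℕ → Bool) (j : ℕ) : useq a j ≠ vseq a j := by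
  intro h
  have := congrFun h j
  simp [useq, vseq] at this

lemma bval_allfalse (a : ℕ → Bool) (h : ∀ i, a i = false) : bval a = 0 := by
  rw [bval]
  convert tsum_zero with i
  rw [h i]
  simp

lemma bval_alltrue (a : ℕ → Bool) (h : ∀ i, a i = true) : bval a = 1 := by
  rw [bval]
  have : ∀ i : ℕ, (if a i then ((2:ℝ)^(i+1))⁻¹ else 0) = ((2:ℝ)^(i+0+1))⁻¹ := by
    intro i; rw [h i, if_pos rfl]
  rw [tsum_congr this, tsum_tail_pow2 0]
  norm_num

lemma exists_true_ge (a : ℕ → Bool) (hu : ∀ b, bval b = bval a → b = a)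
    (h0 : 0 < bval a) (n : ℕ) : ∃ i, n ≤ i ∧ a i = true := by
  by_contra hc
  push_neg at hc
  have hfalse : ∀ i, n ≤ i → a i = false := by
    intro i hi
    cases hab : a i
    · rfl
    · exact absurd hab (hc i hi)
  by_cases hex : ∃ j, a j = true
  · -- largest true index
    classical
    have hsub : ∀ j, a j = true → j < n := by
      intro j hj
      by_contra hjn
      rw [hfalse j (by omega)] at hj
      exact Bool.noConfusion hj
    obtain ⟨j0, hj0⟩ := hex
    -- take maximum true index
    let T := (Finset.range n).filter (fun i => a i = true)
    have hT : T.Nonempty := ⟨j0, by simp [T, Finset.mem_filter, hj0, hsub j0 hj0]⟩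
    set j := T.max' hT with hjdef
    have hjT : j ∈ T := T.max'_mem hT
    have haj : a j = true := (Finset.mem_filter.1 hjT).2
    have hmax : ∀ i, j < i → a i = false := by
      intro i hji
      cases hai : a i
      · rfl
      · exfalso
        have : i ∈ T := by simp [T, Finset.mem_filter, hai, hsub i hai]
        have := T.le_max' i this
        omega
    have haeq : a = useq a j := by
      funext i
      simp only [useq]
      rcases lt_trichotomy i j with h | h | h
      · rw [if_pos h]
      · subst h; rw [if_neg (lt_irrefl _), decide_eq_true rfl, haj]
      · rw [if_neg (by omega), decide_eq_false (by omega), hmax i h]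
    have : bval (vseq a j) = bval a := by
      rw [bval_vseq, ← bval_useq, ← haeq]
    have := hu _ this
    exact useq_ne_vseq a j (this.trans haeq).symm
  · push_neg at hex
    have : bval a = 0 := bval_allfalse a (by intro i; cases h : a i; rfl; exact absurd h (hex i))
    linarith

lemma exists_false_ge (a : ℕ → Bool) (hu : ∀ b, bval b = bval a → b = a)
    (h1 : bval a < 1) (n : ℕ) : ∃ i, n ≤ i ∧ a i = false := by
  by_contra hc
  push_neg at hc
  have htrue : ∀ i, n ≤ i → a i = true := by
    intro i hi
    cases hab : a i
    · exact absurd hab (hc i hi)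
    · rfl
  by_cases hex : ∃ j, a j = false
  · classical
    have hsub : ∀ j, a j = false → j < n := by
      intro j hj
      by_contra hjn
      rw [htrue j (by omega)] at hj
      exact Bool.noConfusion hj
    obtain ⟨j0, hj0⟩ := hex
    let T := (Finset.range n).filter (fun i => a i = false)
    have hT : T.Nonempty := ⟨j0, by simp [T, Finset.mem_filter, hj0, hsub j0 hj0]⟩
    set j := T.max' hT with hjdef
    have hjT : j ∈ T := T.max'_mem hT
    have haj : a j = false := by
      have := (Finset.mem_filter.1 hjT).2
      simpa using this
    have hmax : ∀ i, j < i → a i = true := by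
      intro i hji
      cases hai : a i
      · exfalso
        have : i ∈ T := by simp [T, Finset.mem_filter, hai, hsub i hai]
        have := T.le_max' i this
        omega
      · rfl
    have haeq : a = vseq a j := by
      funext i
      simp only [vseq]
      rcases lt_trichotomy i j with h | h | h
      · rw [if_pos h]
      · subst h; rw [if_neg (lt_irrefl _), decide_eq_true rfl, haj]; rfl
      · rw [if_neg (by omega), decide_eq_false (by omega), hmax i h]; rfl
    have : bval (useq a j) = bval a := by
      rw [bval_useq, ← bval_vseq, ← haeq]
    have := hu _ this
    exact useq_ne_vseq a j (this.trans haeq)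
  · push_neg at hex
    have : bval a = 1 := bval_alltrue a (by
      intro i; cases h : a i; exact absurd h (hex i); rfl)
    linarith

lemma two_pow_succ_inv (m : ℕ) : ((2:ℝ)^m)⁻¹ = 2 * ((2:ℝ)^(m+1))⁻¹ := by
  rw [pow_succ]
  field_simp

lemma bvalP_succ (a : ℕ → Bool) (n : ℕ) :
    bvalP a (n+1) = bvalP a n + (if a n then ((2:ℝ)^(n+1))⁻¹ else 0) := by
  unfold bvalP
  rw [Finset.sum_range_succ]

lemma bval_lt_bval (b c : ℕ → Bool) (m : ℕ) (hag : ∀ i < m, b i = c i)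
    (hb : b m = false) (hc : c m = true)
    (hstrict : ∃ i, m + 1 ≤ i ∧ b i = false) : bval b < bval c := by
  have hPb : bvalP b (m+1) = bvalP b m := by
    rw [bvalP_succ, hb]
    simp
  have hPc : bvalP c (m+1) = bvalP c m + ((2:ℝ)^(m+1))⁻¹ := by
    rw [bvalP_succ, hc]
    simp
  have hP : bvalP b m = bvalP c m := bvalP_congr b c m hag
  have h1 : bval b < bvalP b m + ((2:ℝ)^(m+1))⁻¹ := by
    rw [bval_split b (m+1), hPb]
    have := btail_lt b (m+1) hstrict
    linarith
  have h2 : bvalP c m + ((2:ℝ)^(m+1))⁻¹ ≤ bval c := by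
    rw [bval_split c (m+1), hPc]
    linarith [btail_nonneg c (m+1)]
  linarith [hP ▸ h1]

lemma prefix_of_mem_Ioo (a b : ℕ → Bool) (n : ℕ)
    (h : bval b ∈ Set.Ioo (bvalP a n) (bvalP a n + ((2:ℝ)^n)⁻¹)) :
    ∀ i < n, b i = a i := by
  induction n with
  | zero => intro i hi; omega
  | succ n ih =>
    have hsub : bvalP a n ≤ bvalP a (n+1) ∧
        bvalP a (n+1) + ((2:ℝ)^(n+1))⁻¹ ≤ bvalP a n + ((2:ℝ)^n)⁻¹ := by
      rw [bvalP_succ]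
      have h2 := two_pow_succ_inv n
      have hpos : (0:ℝ) < ((2:ℝ)^(n+1))⁻¹ := by positivity
      cases ha : a n <;> simp [ha] <;> linarith
    have hIH : ∀ i < n, b i = a i := by
      apply ih
      exact ⟨lt_of_le_of_lt hsub.1 h.1, lt_of_lt_of_le h.2 hsub.2⟩
    intro i hi
    rcases Nat.lt_succ_iff_lt_or_eq.1 hi with hi' | hi'
    · exact hIH i hi'
    · subst hi'
      have hPeq : bvalP b i = bvalP a i := bvalP_congr b a i hIH
      have hbIcc := bval_mem_Icc b (i+1)
      have hPb : bvalP b (i+1) = bvalP a i + (if b i then ((2:ℝ)^(i+1))⁻¹ else 0) := by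
        rw [bvalP_succ, hPeq]
      have hPa : bvalP a (i+1) = bvalP a i + (if a i then ((2:ℝ)^(i+1))⁻¹ else 0) :=
        bvalP_succ a i
      rw [hPb] at hbIcc
      rw [hPa] at h
      have hpos : (0:ℝ) < ((2:ℝ)^(i+1))⁻¹ := by positivity
      obtain ⟨hL, hR⟩ := hbIcc
      obtain ⟨hL', hR'⟩ := h
      cases hbi : b i <;> cases hai : a i <;> rw [hbi] at hL hR <;> rw [hai] at hL' hR' <;>
        simp only [if_true, Bool.false_eq_true, if_false] at hL hR hL' hR'
      all_goals first | rfl | (exfalso; linarith)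

lemma bswap_agree (b c : ℕ → Bool) (m : ℕ) (hm : m % 2 = 0)
    (h : ∀ i < m, b i = c i) : ∀ i < m, bswap b i = bswap c i := by
  intro i hi
  unfold bswap
  rcases Nat.even_or_odd i with he | ho
  · have h2 : i % 2 = 0 := Nat.even_iff.1 he
    rw [if_pos h2, if_pos h2]
    exact h (i+1) (by omega)
  · have h2 : i % 2 = 1 := Nat.odd_iff.1 ho
    rw [if_neg (by omega), if_neg (by omega)]
    exact h (i-1) (by omega)

lemma bswap_exists_false (b : ℕ → Bool) (h : ∀ n, ∃ i, n ≤ i ∧ b i = false) :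
    ∀ n, ∃ i, n ≤ i ∧ bswap b i = false := by
  intro n
  obtain ⟨i, hni, hbi⟩ := h (n + 1)
  rcases Nat.even_or_odd i with he | ho
  · have h2 : i % 2 = 0 := Nat.even_iff.1 he
    refine ⟨i + 1, by omega, ?_⟩
    unfold bswap
    rw [if_neg (by omega)]
    simpa using hbi
  · have h2 : i % 2 = 1 := Nat.odd_iff.1 ho
    refine ⟨i - 1, by omega, ?_⟩
    unfold bswap
    rw [if_pos (by omega)]
    have : i - 1 + 1 = i := by omega
    rw [this]
    exact hbi

def wseq (a : ℕ → Bool) (m : ℕ) (d1 d2 : Bool) : ℕ → Bool :=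
  fun i => if i = m then d1 else if i = m + 1 then d2 else a i

lemma bvalP_wseq (a : ℕ → Bool) (m : ℕ) (d1 d2 : Bool) :
    bvalP (wseq a m d1 d2) (m+2) = bvalP a m + (if d1 then ((2:ℝ)^(m+1))⁻¹ else 0)
      + (if d2 then ((2:ℝ)^(m+2))⁻¹ else 0) := by
  rw [show m + 2 = (m+1)+1 from rfl, bvalP_succ, bvalP_succ]
  have h1 : wseq a m d1 d2 m = d1 := by simp [wseq]
  have h2 : wseq a m d1 d2 (m+1) = d2 := by simp [wseq]
  rw [h1, h2]
  congr 1
  congr 1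
  apply bvalP_congr
  intro i hi
  unfold wseq
  rw [if_neg (by omega), if_neg (by omega)]

/-- Structure of membership in the agreement set. -/
lemma mem_E_struct {g : ℝ → ℝ} {S : Set ℝ} {E : Set ℝ}
    (hE : E = {x : ℝ | x ∈ S ∧ (x, g x) ∈ swapGraph}) {x : ℝ} (hx : x ∈ E) :
    x ∈ S ∧ ∃ a : ℕ → Bool, bval a = x ∧ (∀ b : ℕ → Bool, bval b = x → b = a) ∧
      x ∈ Set.Ioo (0:ℝ) 1 ∧ g x = bval (bswap a) := by
  rw [hE] at hx
  exact hx

lemma quarter_exclusion {g : ℝ → ℝ} {S : Set ℝ}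
    (hg : MonotoneOn g S ∨ AntitoneOn g S) {E : Set ℝ}
    (hE : E = {x : ℝ | x ∈ S ∧ (x, g x) ∈ swapGraph})
    (m : ℕ) (hm : m % 2 = 0) (a : ℕ → Bool) :
    ∃ d1 d2 : Bool, ∀ y ∈ E,
      y ∉ Set.Ioo (bvalP (wseq a m d1 d2) (m+2))
        (bvalP (wseq a m d1 d2) (m+2) + ((2:ℝ)^(m+2))⁻¹) := by
  -- in the monotone case use quarters (false,true) and (true,false);
  -- in the antitone case use quarters (false,false) and (true,true)
  have key : ∀ (e1 e2 f1 f2 : Bool), ∀ y ∈ E, ∀ z ∈ E,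
      y ∈ Set.Ioo (bvalP (wseq a m e1 e2) (m+2))
        (bvalP (wseq a m e1 e2) (m+2) + ((2:ℝ)^(m+2))⁻¹) →
      z ∈ Set.Ioo (bvalP (wseq a m f1 f2) (m+2))
        (bvalP (wseq a m f1 f2) (m+2) + ((2:ℝ)^(m+2))⁻¹) →
      (∀ i < m + 2, True) →
      -- digit facts
      ∃ b c : ℕ → Bool, bval b = y ∧ bval c = z ∧
        (∀ i < m, b i = c i) ∧ b m = e1 ∧ b (m+1) = e2 ∧ c m = f1 ∧ c (m+1) = f2 ∧
        (∀ n, ∃ i, n ≤ i ∧ b i = false) ∧ (∀ n, ∃ i, n ≤ i ∧ c i = false) ∧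
        g y = bval (bswap b) ∧ g z = bval (bswap c) ∧ y ∈ S ∧ z ∈ S := by
    intro e1 e2 f1 f2 y hy z hz hyI hzI _
    obtain ⟨yS, b, hb, hbu, hyIoo, hgy⟩ := mem_E_struct hE hy
    obtain ⟨zS, c, hc, hcu, hzIoo, hgz⟩ := mem_E_struct hE hz
    have hbpre := prefix_of_mem_Ioo (wseq a m e1 e2) b (m+2) (by rw [hb]; exact hyI)
    have hcpre := prefix_of_mem_Ioo (wseq a m f1 f2) c (m+2) (by rw [hc]; exact hzI)
    have hbm : b m = e1 := by rw [hbpre m (by omega)]; simp [wseq]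
    have hbm1 : b (m+1) = e2 := by rw [hbpre (m+1) (by omega)]; simp [wseq]
    have hcm : c m = f1 := by rw [hcpre m (by omega)]; simp [wseq]
    have hcm1 : c (m+1) = f2 := by rw [hcpre (m+1) (by omega)]; simp [wseq]
    have hagree : ∀ i < m, b i = c i := by
      intro i hi
      rw [hbpre i (by omega), hcpre i (by omega)]
      unfold wseq
      rw [if_neg (by omega), if_neg (by omega), if_neg (by omega), if_neg (by omega)]
    have hbf : ∀ n, ∃ i, n ≤ i ∧ b i = false := by
      intro n
      apply exists_false_ge b (by rw [hb]; exact hbu)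
      rw [hb]; exact hyIoo.2
    have hcf : ∀ n, ∃ i, n ≤ i ∧ c i = false := by
      intro n
      apply exists_false_ge c (by rw [hc]; exact hcu)
      rw [hc]; exact hzIoo.2
    exact ⟨b, c, hb, hc, hagree, hbm, hbm1, hcm, hcm1, hbf, hcf, hgy, hgz, yS, zS⟩
  rcases hg with hmono | hanti
  · -- monotone : quarters 01 and 10 cannot both meet E
    by_cases h01 : ∃ y ∈ E, y ∈ Set.Ioo (bvalP (wseq a m false true) (m+2))
        (bvalP (wseq a m false true) (m+2) + ((2:ℝ)^(m+2))⁻¹)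
    · refine ⟨true, false, ?_⟩
      intro z hz hzI
      obtain ⟨y, hy, hyI⟩ := h01
      obtain ⟨b, c, hb, hc, hagree, hbm, hbm1, hcm, hcm1, hbf, hcf, hgy, hgz, yS, zS⟩ :=
        key false true true false y hy z hz hyI hzI (fun _ _ => trivial)
      have hyz : y < z := by
        rw [← hb, ← hc]
        exact bval_lt_bval b c m hagree hbm hcm (hbf (m+1))
      have hgle : g y ≤ g z := hmono yS zS (le_of_lt hyz)
      have hswap : bval (bswap c) < bval (bswap b) := by
        apply bval_lt_bval (bswap c) (bswap b) m
          (bswap_agree c b m hm (fun i hi => (hagree i hi).symm))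
        · show bswap c m = false
          unfold bswap; rw [if_pos hm]; exact hcm1
        · show bswap b m = true
          unfold bswap; rw [if_pos hm]; exact hbm1
        · exact bswap_exists_false c hcf (m+1)
      rw [hgy, hgz] at hgle
      linarith
    · refine ⟨false, true, ?_⟩
      intro y hy hyI
      exact h01 ⟨y, hy, hyI⟩
  · -- antitone : quarters 00 and 11 cannot both meet E
    by_cases h00 : ∃ y ∈ E, y ∈ Set.Ioo (bvalP (wseq a m false false) (m+2))
        (bvalP (wseq a m false false) (m+2) + ((2:ℝ)^(m+2))⁻¹)
    · refine ⟨true, true, ?_⟩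
      intro z hz hzI
      obtain ⟨y, hy, hyI⟩ := h00
      obtain ⟨b, c, hb, hc, hagree, hbm, hbm1, hcm, hcm1, hbf, hcf, hgy, hgz, yS, zS⟩ :=
        key false false true true y hy z hz hyI hzI (fun _ _ => trivial)
      have hyz : y < z := by
        rw [← hb, ← hc]
        exact bval_lt_bval b c m hagree hbm hcm (hbf (m+1))
      have hgle : g z ≤ g y := hanti yS zS (le_of_lt hyz)
      have hswap : bval (bswap b) < bval (bswap c) := by
        apply bval_lt_bval (bswap b) (bswap c) m
          (bswap_agree b c m hm hagree)
        · show bswap b m = false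
          unfold bswap; rw [if_pos hm]; exact hbm1
        · show bswap c m = true
          unfold bswap; rw [if_pos hm]; exact hcm1
        · exact bswap_exists_false b hbf (m+1)
      rw [hgy, hgz] at hgle
      linarith
    · refine ⟨false, false, ?_⟩
      intro y hy hyI
      exact h00 ⟨y, hy, hyI⟩

lemma density_bound {g : ℝ → ℝ} {S : Set ℝ}
    (hg : MonotoneOn g S ∨ AntitoneOn g S) {E : Set ℝ}
    (hE : E = {x : ℝ | x ∈ S ∧ (x, g x) ∈ swapGraph})
    {x : ℝ} (hx : x ∈ E) {ε : ℝ} (hε0 : 0 < ε) (hε1 : ε < 1) :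
    volume (E ∩ Set.Ioo (x - ε) (x + ε)) / volume (Set.Ioo (x - ε) (x + ε))
      ≤ ENNReal.ofReal (63/64) := by
  classical
  obtain ⟨xS, a, ha, hau, hxIoo, hgx⟩ := mem_E_struct hE hx
  have hat : ∀ n, ∃ i, n ≤ i ∧ a i = true := fun n =>
    exists_true_ge a (by rw [ha]; exact hau) (by rw [ha]; exact hxIoo.1) n
  have haf : ∀ n, ∃ i, n ≤ i ∧ a i = false := fun n =>
    exists_false_ge a (by rw [ha]; exact hau) (by rw [ha]; exact hxIoo.2) n
  -- choose scale
  have hex : ∃ n : ℕ, ((2:ℝ)^(2*n))⁻¹ ≤ ε := by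
    obtain ⟨n, hn⟩ := exists_pow_lt_of_lt_one hε0 (by norm_num : (1/2 : ℝ) < 1)
    refine ⟨n, le_of_lt (lt_of_le_of_lt ?_ hn)⟩
    rw [← inv_pow, show ((2:ℝ))⁻¹ = 1/2 by norm_num]
    exact pow_le_pow_of_le_one (by norm_num) (by norm_num) (by omega)
  set n := Nat.find hex with hndef
  have hn : ((2:ℝ)^(2*n))⁻¹ ≤ ε := Nat.find_spec hex
  have hn0 : n ≠ 0 := by
    intro h0
    have := hn
    rw [h0] at this
    simp at this
    linarith
  have hmin : ¬ ((2:ℝ)^(2*(n-1)))⁻¹ ≤ ε := Nat.find_min hex (by omega)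
  push_neg at hmin
  set m := 2 * n with hmdef
  have hm : m % 2 = 0 := by omega
  set L : ℝ := ((2:ℝ)^m)⁻¹ with hLdef
  set q : ℝ := ((2:ℝ)^(m+2))⁻¹ with hqdef
  have hq4 : L = 4 * q := by
    rw [hLdef, hqdef, pow_add]
    have : (0:ℝ) < (2:ℝ)^m := by positivity
    field_simp
    ring
  have hqpos : 0 < q := by positivity
  have hLε : L ≤ ε := hn
  have hεL : ε < 4 * L := by
    have h1 : ((2:ℝ)^(2*(n-1)))⁻¹ = 4 * L := by
      rw [hLdef, hmdef, show 2*n = 2*(n-1) + 2 by omega, pow_add]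
      have : (0:ℝ) < (2:ℝ)^(2*(n-1)) := by positivity
      field_simp
      ring
    rw [← h1]
    exact hmin
  set P : ℝ := bvalP a m with hPdef
  have hxK : x ∈ Set.Ioo P (P + L) := by
    rw [← ha]
    constructor
    · rw [bval_split a m]
      have := btail_pos a m (hat m)
      linarith
    · rw [bval_split a m]
      have := btail_lt a m (haf m)
      linarith
  obtain ⟨d1, d2, hquarter⟩ := quarter_exclusion hg hE m hm a
  set c : ℝ := bvalP (wseq a m d1 d2) (m+2) with hcdef
  have hcP : P ≤ c ∧ c + q ≤ P + L := by
    rw [hcdef, bvalP_wseq, ← hPdef, hq4]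
    have h2q : ((2:ℝ)^(m+1))⁻¹ = 2 * q := by
      rw [hqdef, show m + 2 = (m+1)+1 from rfl, two_pow_succ_inv]
    rw [h2q, ← hqdef]
    cases d1 <;> cases d2 <;> simp <;> try constructor
    all_goals linarith
  have hQsub : Set.Ioo c (c + q) ⊆ Set.Ioo (x - ε) (x + ε) := by
    intro t ht
    constructor
    · have : x - ε ≤ x - L := by linarith
      have hPx : x - L < P := by have := hxK.2; linarith
      have : x - ε < c := by linarith [hcP.1]
      linarith [ht.1]
    · have : c + q ≤ P + L := hcP.2
      have : P + L < x + L := by linarith [hxK.1]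
      have : t < x + L := by linarith [ht.2]
      linarith
  have hEQ : E ∩ Set.Ioo (x - ε) (x + ε) ⊆ Set.Ioo (x - ε) (x + ε) \ Set.Ioo c (c + q) := by
    intro t ⟨htE, htI⟩
    exact ⟨htI, fun htQ => hquarter t htE htQ⟩
  have hvolI : volume (Set.Ioo (x - ε) (x + ε)) = ENNReal.ofReal (2 * ε) := by
    rw [Real.volume_Ioo]
    congr 1
    ring
  have hvolQ : volume (Set.Ioo c (c + q)) = ENNReal.ofReal q := by
    rw [Real.volume_Ioo]
    congr 1
    ring
  have hdiff : volume (Set.Ioo (x - ε) (x + ε) \ Set.Ioo c (c + q))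
      = ENNReal.ofReal (2 * ε) - ENNReal.ofReal q := by
    rw [measure_diff hQsub measurableSet_Ioo.nullMeasurableSet
      (by rw [hvolQ]; exact ENNReal.ofReal_ne_top), hvolI, hvolQ]
  have hkey : volume (E ∩ Set.Ioo (x - ε) (x + ε)) ≤ ENNReal.ofReal (2 * ε - q) := by
    calc volume (E ∩ Set.Ioo (x - ε) (x + ε)) ≤
        volume (Set.Ioo (x - ε) (x + ε) \ Set.Ioo c (c + q)) := measure_mono hEQ
      _ = ENNReal.ofReal (2 * ε) - ENNReal.ofReal q := hdiff
      _ = ENNReal.ofReal (2 * ε - q) := (ENNReal.ofReal_sub _ (le_of_lt hqpos)).symm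
  rw [hvolI]
  apply ENNReal.div_le_of_le_mul
  calc volume (E ∩ Set.Ioo (x - ε) (x + ε)) ≤ ENNReal.ofReal (2 * ε - q) := hkey
    _ ≤ ENNReal.ofReal (63/64 * (2 * ε)) := by
        apply ENNReal.ofReal_le_ofReal
        have hqε : ε / 16 < q := by
          rw [hq4] at hεL
          linarith
        linarith
    _ = ENNReal.ofReal (63/64) * ENNReal.ofReal (2 * ε) := by
        rw [ENNReal.ofReal_mul (by norm_num)]


/-- For any monotone (or antitone) function `g`, the set on which `g` agrees
with the digit-swapping function has Lebesgue density at most `1 - 2⁻⁶` at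
every one of its points (if measurable), hence is a null set. -/
theorem swap_agreement_null (g : ℝ → ℝ) (S : Set ℝ)
    (hg : MonotoneOn g S ∨ AntitoneOn g S)
    (E : Set ℝ) (hE : E = {x : ℝ | x ∈ S ∧ (x, g x) ∈ swapGraph})
    (hEm : MeasurableSet E) :
    (∀ x ∈ E, limsup
        (fun ε : ℝ => volume (E ∩ Set.Ioo (x - ε) (x + ε)) /
          volume (Set.Ioo (x - ε) (x + ε)))
        (nhdsWithin 0 (Set.Ioi (0 : ℝ))) ≤ 1 - 2⁻¹ ^ 6) ∧
      volume E = 0 := by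
  have hconst : ENNReal.ofReal (63/64) ≤ 1 - 2⁻¹ ^ 6 := by
    have h1 : ((2:ENNReal))⁻¹ ^ 6 = (64:ENNReal)⁻¹ := by
      rw [← ENNReal.inv_pow]; norm_num
    rw [h1]
    apply ENNReal.le_sub_of_add_le_right (by simp)
    have h2 : ((64:ENNReal))⁻¹ = ENNReal.ofReal (1/64) := by
      rw [ENNReal.ofReal_div_of_pos (by norm_num), ENNReal.ofReal_one]
      norm_num [ENNReal.ofReal_ofNat]
    rw [h2, ← ENNReal.ofReal_add (by norm_num) (by norm_num)]
    norm_num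
  have hpart1 : ∀ x ∈ E, limsup
      (fun ε : ℝ => volume (E ∩ Set.Ioo (x - ε) (x + ε)) /
        volume (Set.Ioo (x - ε) (x + ε)))
      (nhdsWithin 0 (Set.Ioi (0 : ℝ))) ≤ 1 - 2⁻¹ ^ 6 := by
    intro x hx
    refine le_trans ?_ hconst
    apply limsup_le_of_le
    · isBoundedDefault
    · filter_upwards [Ioo_mem_nhdsGT_of_mem
        (show (0:ℝ) ∈ Set.Ico (0:ℝ) 1 by simp)] with ε hε
      exact density_bound hg hE hx hε.1 hε.2
  refine ⟨hpart1, ?_⟩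
  by_contra hvol
  have hres : volume.restrict E ≠ 0 := by
    intro h
    rw [Measure.restrict_eq_zero] at h
    exact hvol h
  have : (MeasureTheory.ae (volume.restrict E)).NeBot := ae_neBot.2 hres
  have hbes := Besicovitch.ae_tendsto_measure_inter_div volume E
  have hmem : ∀ᵐ x ∂volume.restrict E, x ∈ E := ae_restrict_mem hEm
  obtain ⟨x, hxT, hxE⟩ := (hbes.and hmem).exists
  -- convert closed-ball ratio to open-interval ratio
  have hcongr : (fun r : ℝ => volume (E ∩ Metric.closedBall x r) / volume (Metric.closedBall x r))
      =ᶠ[nhdsWithin 0 (Set.Ioi (0:ℝ))]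
      (fun ε : ℝ => volume (E ∩ Set.Ioo (x - ε) (x + ε)) /
        volume (Set.Ioo (x - ε) (x + ε))) := by
    filter_upwards [self_mem_nhdsWithin] with r (hr : 0 < r)
    have hIcc : Metric.closedBall x r = Set.Icc (x - r) (x + r) := Real.closedBall_eq_Icc
    have hvol : volume (Metric.closedBall x r) = volume (Set.Ioo (x - r) (x + r)) := by
      rw [Real.volume_closedBall, Real.volume_Ioo]
      congr 1
      ring
    have hset : volume (E ∩ Metric.closedBall x r) = volume (E ∩ Set.Ioo (x - r) (x + r)) := by
      rw [hIcc]
      apply le_antisymm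
      · have hsub : E ∩ Set.Icc (x - r) (x + r) ⊆
            (E ∩ Set.Ioo (x - r) (x + r)) ∪ ({x - r} ∪ {x + r}) := by
          intro t ⟨htE, htI⟩
          rcases eq_or_lt_of_le htI.1 with h1 | h1
          · exact Or.inr (Or.inl (by simp [← h1]))
          · rcases eq_or_lt_of_le htI.2 with h2 | h2
            · exact Or.inr (Or.inr (by simp [h2]))
            · exact Or.inl ⟨htE, h1, h2⟩
        calc volume (E ∩ Set.Icc (x - r) (x + r)) ≤
            volume ((E ∩ Set.Ioo (x - r) (x + r)) ∪ ({x - r} ∪ {x + r})) := measure_mono hsub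
          _ ≤ volume (E ∩ Set.Ioo (x - r) (x + r)) + volume ({x - r} ∪ ({x + r} : Set ℝ)) :=
            measure_union_le _ _
          _ ≤ volume (E ∩ Set.Ioo (x - r) (x + r)) + (volume ({x - r} : Set ℝ)
              + volume ({x + r} : Set ℝ)) := by
            gcongr
            exact measure_union_le _ _
          _ = volume (E ∩ Set.Ioo (x - r) (x + r)) := by
            rw [Real.volume_singleton, Real.volume_singleton]
            simp
      · exact measure_mono (Set.inter_subset_inter_right E Set.Ioo_subset_Icc_self)
    rw [hvol, hset]
  have hT : Tendsto (fun ε : ℝ => volume (E ∩ Set.Ioo (x - ε) (x + ε)) /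
      volume (Set.Ioo (x - ε) (x + ε))) (nhdsWithin 0 (Set.Ioi (0:ℝ))) (nhds 1) :=
    hxT.congr' hcongr
  have hlimsup := hT.limsup_eq
  have := hpart1 x hxE
  rw [hlimsup] at this
  have hlt : (1 : ENNReal) - 2⁻¹ ^ 6 < 1 := by
    apply ENNReal.sub_lt_self ENNReal.one_ne_top one_ne_zero
    apply pow_ne_zero
    simp
  exact absurd this (not_le.2 hlt)
end
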